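/- arXiv:2401.14644 — 2 statements merged into one kernel-verified Lean document; each statement's English description precedes it below -/
import Mathlib

section
/- The Jacobson radical of the ring K¹𝒫 equals the K-linear span of {B_{ji} : i ≺ j in 𝒫}; the matrices B_{ji} with i ≺ j and i ≠ m(j) form a K-basis of this radical; and K¹𝒫 is the internal direct sum of the K-linear span of {ε₀} ∪ {ε_j : j ∈ 𝒫'} and its Jacobson radical. -/
open Matrix

/-- A finite poset structure on `{1,…,n}` (modeled as `Fin n`) whose order
relation refines the natural linear order. -/
structure PosetOn (n : ℕ) where
  le : Fin n → Fin n → Prop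
  le_refl : ∀ i, le i i
  le_trans : ∀ {i j k : Fin n}, le i j → le j k → le i k
  le_compat : ∀ {i j : Fin n}, le i j → i ≤ j

/-- The strict order `i ≺ j`. -/
def PosetOn.lt {n : ℕ} (P : PosetOn n) (i j : Fin n) : Prop := P.le i j ∧ i ≠ j

/-- `i` is a minimal element of `𝒫`. -/
def PosetOn.IsMin {n : ℕ} (P : PosetOn n) (i : Fin n) : Prop := ∀ j, P.le j i → j = i

/-- A minimal marking of `𝒫`. -/
structure MinimalMarking {n : ℕ} (P : PosetOn n) where
  m : Fin n → Fin n
  isMin : ∀ j, P.IsMin (m j)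
  le : ∀ j, P.le (m j) j

/-- The incidence algebra `K𝒫` as a set of `n × n` matrices. -/
def KPset (K : Type) [Field K] {n : ℕ} (P : PosetOn n) : Set (Matrix (Fin n) (Fin n) K) :=
  {M | ∀ j i, M j i ≠ 0 → P.le i j}

/-- The row-balanced incidence algebra `K¹𝒫`. -/
def KPoneSet (K : Type) [Field K] {n : ℕ} (P : PosetOn n) : Set (Matrix (Fin n) (Fin n) K) :=
  {M | M ∈ KPset K P ∧ ∃ c : K, M *ᵥ (fun _ => 1) = fun _ => c}

/-- `B_{ji} := E_{ji} − E_{j m(j)}`. -/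
def Bmat (K : Type) [Field K] {n : ℕ} (P : PosetOn n) (mk : MinimalMarking P) (j i : Fin n) :
    Matrix (Fin n) (Fin n) K :=
  single j i 1 - single j (mk.m j) 1

/-- The set `{B_{ji} : i ≺ j}`. -/
def BSet (K : Type) [Field K] {n : ℕ} (P : PosetOn n) (mk : MinimalMarking P) :
    Set (Matrix (Fin n) (Fin n) K) :=
  {M | ∃ i j, P.lt i j ∧ M = Bmat K P mk j i}

/-- `ε_j := E_{jj} − E_{j m(j)}`. -/
def epsMat (K : Type) [Field K] {n : ℕ} (P : PosetOn n) (mk : MinimalMarking P) (j : Fin n) :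
    Matrix (Fin n) (Fin n) K :=
  single j j 1 - single j (mk.m j) 1

/-- `ε₀ := Id_n − Σ_{j ∈ 𝒫'} ε_j`. -/
noncomputable def eps0Mat (K : Type) [Field K] {n : ℕ} (P : PosetOn n) (mk : MinimalMarking P) :
    Matrix (Fin n) (Fin n) K :=
  letI := Classical.decPred fun j : Fin n => P.IsMin j
  1 - ∑ j ∈ Finset.univ.filter (fun j : Fin n => ¬ P.IsMin j), epsMat K P mk j

/-- The set `{ε₀} ∪ {ε_j : j ∈ 𝒫'}`. -/
def idemSet (K : Type) [Field K] {n : ℕ} (P : PosetOn n) (mk : MinimalMarking P) :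
    Set (Matrix (Fin n) (Fin n) K) :=
  insert (eps0Mat K P mk) {M | ∃ j, ¬ P.IsMin j ∧ M = epsMat K P mk j}

/-- The matrices `B_{ji}` with `i ≺ j` and `i ≠ m(j)`, as a family. -/
def Bfam (K : Type) [Field K] {n : ℕ} (P : PosetOn n) (mk : MinimalMarking P)
    (q : {p : Fin n × Fin n // P.lt p.1 p.2 ∧ p.1 ≠ mk.m p.2}) : Matrix (Fin n) (Fin n) K :=
  Bmat K P mk q.1.2 q.1.1

namespace Stmt3Aux

open Finset

variable (K : Type) [Field K] {n : ℕ} (P : PosetOn n) (mk : MinimalMarking P)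

theorem le_antisymm' {i j : Fin n} (h1 : P.le i j) (h2 : P.le j i) : i = j :=
  le_antisymm (P.le_compat h1) (P.le_compat h2)

theorem m_eq_of_isMin {j : Fin n} (hj : P.IsMin j) : mk.m j = j := hj _ (mk.le j)

theorem m_ne_of_not_isMin {j : Fin n} (hj : ¬ P.IsMin j) : mk.m j ≠ j :=
  fun h => hj (h ▸ mk.isMin j)

theorem not_isMin_of_lt {i j : Fin n} (h : P.lt i j) : ¬ P.IsMin j :=
  fun hj => h.2 (hj i h.1)

theorem Bmat_apply (j i a b : Fin n) :
    Bmat K P mk j i a b =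
      (if j = a ∧ i = b then (1:K) else 0) - (if j = a ∧ mk.m j = b then 1 else 0) := rfl

theorem epsMat_apply (j a b : Fin n) :
    epsMat K P mk j a b =
      (if j = a ∧ j = b then (1:K) else 0) - (if j = a ∧ mk.m j = b then 1 else 0) := rfl

theorem sum_eps_apply (a b : Fin n) :
    haveI := Classical.decPred fun j : Fin n => P.IsMin j
    ∑ j ∈ Finset.univ.filter (fun j : Fin n => ¬ P.IsMin j), epsMat K P mk j a b
      = if P.IsMin a then 0 else epsMat K P mk a a b := by
  letI := Classical.decPred fun j : Fin n => P.IsMin j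
  by_cases h : P.IsMin a
  · rw [if_pos h]
    refine Finset.sum_eq_zero fun j hj => ?_
    have hja : j ≠ a := fun hh => (Finset.mem_filter.mp hj).2 (hh ▸ h)
    simp [epsMat_apply, hja]
  · rw [if_neg h]
    refine Finset.sum_eq_single_of_mem a (by simp [h]) fun j _ hja => ?_
    simp [epsMat_apply, hja]

open Classical in
theorem eps0Mat_apply (a b : Fin n) :
    eps0Mat K P mk a b =
      if P.IsMin a then (if a = b then (1:K) else 0) else (if mk.m a = b then 1 else 0) := by
  letI := Classical.decPred fun j : Fin n => P.IsMin j
  have : eps0Mat K P mk a b = (1 : Matrix (Fin n) (Fin n) K) a b -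
      ∑ j ∈ Finset.univ.filter (fun j : Fin n => ¬ P.IsMin j), epsMat K P mk j a b := by
    simp [eps0Mat, Matrix.sub_apply, Matrix.sum_apply]
  rw [this, sum_eps_apply]
  by_cases h : P.IsMin a
  · simp [h, Matrix.one_apply]
  · simp [h, Matrix.one_apply, epsMat_apply, sub_sub_cancel]

theorem sum_Bmat_row (j i a : Fin n) : ∑ b, Bmat K P mk j i a b = 0 := by
  simp [Bmat_apply, Finset.sum_sub_distrib, ite_and]

theorem sum_eps_row (j a : Fin n) : ∑ b, epsMat K P mk j a b = 0 := by
  simp [epsMat_apply, Finset.sum_sub_distrib, ite_and]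

theorem sum_eps0_row (a : Fin n) : ∑ b, eps0Mat K P mk a b = 1 := by
  by_cases h : P.IsMin a <;> simp [eps0Mat_apply, h]

/-- The candidate radical, as an explicit submodule. -/
def W : Submodule K (Matrix (Fin n) (Fin n) K) where
  carrier := {M | (∀ a b, M a b ≠ 0 → P.lt b a) ∧ ∀ a, ∑ b, M a b = 0}
  add_mem' := by
    rintro x y ⟨hx1, hx2⟩ ⟨hy1, hy2⟩
    refine ⟨fun a b h => ?_, fun a => by
      simp [Matrix.add_apply, Finset.sum_add_distrib, hx2 a, hy2 a]⟩
    by_contra hc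
    have h1 : x a b = 0 := by by_contra h'; exact hc (hx1 a b h')
    have h2 : y a b = 0 := by by_contra h'; exact hc (hy1 a b h')
    exact h (by simp [Matrix.add_apply, h1, h2])
  zero_mem' := ⟨fun a b h => absurd rfl h, fun a => by simp⟩
  smul_mem' := by
    rintro c x ⟨hx1, hx2⟩
    refine ⟨fun a b h => hx1 a b fun h' => h (by simp [Matrix.smul_apply, h']), fun a => ?_⟩
    simp [Matrix.smul_apply, ← Finset.mul_sum, hx2 a]

theorem mem_W_iff {M : Matrix (Fin n) (Fin n) K} :
    M ∈ W K P ↔ (∀ a b, M a b ≠ 0 → P.lt b a) ∧ ∀ a, ∑ b, M a b = 0 := Iff.rfl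

theorem spanB_eq_W : Submodule.span K (BSet K P mk) = W K P := by
  apply le_antisymm
  · rw [Submodule.span_le]
    rintro _ ⟨i, j, hlt, rfl⟩
    refine ⟨fun a b h => ?_, fun a => sum_Bmat_row K P mk j i a⟩
    rw [Bmat_apply] at h
    have hnm : ¬ P.IsMin j := not_isMin_of_lt P hlt
    by_cases h1 : j = a ∧ i = b
    · obtain ⟨rfl, rfl⟩ := h1
      exact hlt
    · by_cases h2 : j = a ∧ mk.m j = b
      · obtain ⟨rfl, rfl⟩ := h2
        exact ⟨mk.le j, m_ne_of_not_isMin P mk hnm⟩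
      · simp [h1, h2] at h
  · rintro M ⟨h1, h2⟩
    classical
    have key : M = ∑ a : Fin n, ∑ b : Fin n,
        M a b • (if P.lt b a then Bmat K P mk a b else 0) := by
      ext x y
      simp only [Matrix.sum_apply]
      have hterm : ∀ a, ∑ b, (M a b • (if P.lt b a then Bmat K P mk a b else 0)) x y
          = if a = x then M x y else 0 := by
        intro a
        have hmul : ∀ b, (M a b • (if P.lt b a then Bmat K P mk a b else 0)) x y
            = M a b * ((if a = x ∧ b = y then (1:K) else 0)
                - (if a = x ∧ mk.m a = y then 1 else 0)) := by
          intro b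
          by_cases h : P.lt b a
          · rw [if_pos h, Matrix.smul_apply, Bmat_apply, smul_eq_mul]
          · have hz : M a b = 0 := by by_contra h'; exact h (h1 a b h')
            rw [if_neg h]
            simp [hz]
        simp only [hmul]
        by_cases hax : a = x
        · subst hax
          simp only [true_and, eq_self_iff_true, if_true]
          rw [Finset.sum_congr rfl (fun b _ => mul_sub (M a b) _ _), Finset.sum_sub_distrib]
          have e1 : ∑ b, M a b * (if b = y then (1:K) else 0) = M a y := by
            simp [mul_ite]
          have e2 : ∑ b, M a b * (if mk.m a = y then (1:K) else 0) = 0 := by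
            by_cases hm : mk.m a = y
            · simp [hm, h2 a]
            · simp [hm]
          rw [e1, e2, sub_zero]
        · simp [hax]
      rw [Finset.sum_congr rfl (fun a _ => hterm a)]
      simp
    rw [key]
    refine Submodule.sum_mem _ fun a _ => Submodule.sum_mem _ fun b _ => ?_
    split_ifs with h
    · exact Submodule.smul_mem _ _ (Submodule.subset_span ⟨b, a, h, rfl⟩)
    · simp

theorem nilpotent_of_mem_W {M : Matrix (Fin n) (Fin n) K} (hM : M ∈ W K P) :
    M ^ n = 0 := by
  obtain ⟨h1, -⟩ := hM
  have key : ∀ (k : ℕ) (a b : Fin n), (a:ℕ) < (b:ℕ) + k → (M ^ k) a b = 0 := by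
    intro k
    induction k with
    | zero =>
      intro a b h
      have hne : a ≠ b := fun hh => by subst hh; omega
      rw [pow_zero, Matrix.one_apply_ne hne]
    | succ k ih =>
      intro a b h
      rw [pow_succ, Matrix.mul_apply]
      refine Finset.sum_eq_zero fun l _ => ?_
      by_cases hMl : M l b = 0
      · simp [hMl]
      · have hbl : P.lt b l := h1 l b hMl
        have hbl' : (b:ℕ) < (l:ℕ) :=
          lt_of_le_of_ne (P.le_compat hbl.1) (fun hh => hbl.2 (Fin.ext hh))
        have : (M ^ k) a l = 0 := ih a l (by omega)
        simp [this]
  ext a b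
  have := key n a b (by have := b.isLt; omega)
  simpa using this

theorem mul_mem_W {A M : Matrix (Fin n) (Fin n) K} (hA : A ∈ KPset K P) (hM : M ∈ W K P) :
    A * M ∈ W K P := by
  obtain ⟨h1, h2⟩ := hM
  constructor
  · intro a b hab
    rw [Matrix.mul_apply] at hab
    obtain ⟨l, -, hl⟩ := Finset.exists_ne_zero_of_sum_ne_zero hab
    have hAl : A a l ≠ 0 := fun h => hl (by simp [h])
    have hMl : M l b ≠ 0 := fun h => hl (by simp [h])
    have hla : P.le l a := hA a l hAl
    have hbl : P.lt b l := h1 l b hMl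
    refine ⟨P.le_trans hbl.1 hla, fun hba => ?_⟩
    exact hbl.2 (le_antisymm' P hbl.1 (hba ▸ hla))
  · intro a
    simp only [Matrix.mul_apply]
    rw [Finset.sum_comm]
    refine Finset.sum_eq_zero fun l _ => ?_
    rw [← Finset.mul_sum, h2 l, mul_zero]

open Classical in
noncomputable def pr (hn : 0 < n) :
    Matrix (Fin n) (Fin n) K →ₗ[K] Matrix (Fin n) (Fin n) K where
  toFun M := (∑ i, M ⟨0, hn⟩ i) • eps0Mat K P mk +
    ∑ j ∈ Finset.univ.filter (fun j : Fin n => ¬ P.IsMin j), M j j • epsMat K P mk j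
  map_add' x y := by
    simp only [Matrix.add_apply, Finset.sum_add_distrib, add_smul]
    abel
  map_smul' c x := by
    simp only [Matrix.smul_apply, smul_eq_mul, RingHom.id_apply, ← Finset.mul_sum, mul_smul]
    rw [← Finset.smul_sum, ← smul_add]

open Classical in
theorem pr_apply (hn : 0 < n) (M : Matrix (Fin n) (Fin n) K) :
    pr K P mk hn M = (∑ i, M ⟨0, hn⟩ i) • eps0Mat K P mk +
      ∑ j ∈ Finset.univ.filter (fun j : Fin n => ¬ P.IsMin j), M j j • epsMat K P mk j := rfl

theorem isMin_zero (hn : 0 < n) : P.IsMin ⟨0, hn⟩ :=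
  fun k hk => Fin.ext (Nat.le_zero.mp (P.le_compat hk))

open Classical in
theorem pr_apply_entry (hn : 0 < n) (M : Matrix (Fin n) (Fin n) K) (a b : Fin n) :
    pr K P mk hn M a b = (∑ i, M ⟨0, hn⟩ i) * eps0Mat K P mk a b +
      (if P.IsMin a then 0 else M a a * epsMat K P mk a a b) := by
  rw [pr_apply, Matrix.add_apply, Matrix.smul_apply, Matrix.sum_apply, smul_eq_mul]
  congr 1
  by_cases h : P.IsMin a
  · rw [if_pos h]
    refine Finset.sum_eq_zero fun j hj => ?_
    have hja : j ≠ a := fun hh => (Finset.mem_filter.mp hj).2 (hh ▸ h)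
    simp [epsMat_apply, hja]
  · rw [if_neg h]
    refine Finset.sum_eq_single_of_mem a (by simp [h]) fun j _ hja => ?_
    simp [epsMat_apply, hja]

theorem pr_eps0 (hn : 0 < n) : pr K P mk hn (eps0Mat K P mk) = eps0Mat K P mk := by
  ext a b
  rw [pr_apply_entry, sum_eps0_row, one_mul]
  by_cases h : P.IsMin a
  · simp [h]
  · have : eps0Mat K P mk a a = 0 := by
      simp [eps0Mat_apply, h, m_ne_of_not_isMin P mk h]
    simp [h, this]

theorem pr_eps (hn : 0 < n) {j : Fin n} (hj : ¬ P.IsMin j) :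
    pr K P mk hn (epsMat K P mk j) = epsMat K P mk j := by
  have h0 := isMin_zero P hn
  have hj0 : j ≠ ⟨0, hn⟩ := fun h => hj (h ▸ h0)
  ext a b
  rw [pr_apply_entry]
  have e1 : ∑ i, epsMat K P mk j ⟨0, hn⟩ i = 0 := by
    refine Finset.sum_eq_zero fun i _ => ?_
    simp [epsMat_apply, hj0]
  rw [e1, zero_mul, zero_add]
  by_cases h : P.IsMin a
  · have hja : j ≠ a := fun hh => hj (hh ▸ h)
    simp [h, epsMat_apply, hja]
  · by_cases hja : j = a
    · subst hja
      have : epsMat K P mk j j j = 1 := by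
        simp [epsMat_apply, m_ne_of_not_isMin P mk hj]
      rw [if_neg h, this, one_mul]
    · have h1 : epsMat K P mk j a b = 0 := by simp [epsMat_apply, hja]
      have h2 : epsMat K P mk j a a = 0 := by simp [epsMat_apply, hja]
      rw [if_neg h, h1, h2, zero_mul]

theorem pr_eq_zero_of_mem_W (hn : 0 < n) {M : Matrix (Fin n) (Fin n) K}
    (hM : M ∈ W K P) : pr K P mk hn M = 0 := by
  obtain ⟨h1, h2⟩ := hM
  have hd : ∀ j, M j j = 0 := fun j => by
    by_contra h'
    exact (h1 j j h').2 rfl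
  ext a b
  rw [pr_apply_entry, h2, zero_mul, zero_add]
  by_cases h : P.IsMin a
  · simp [h]
  · simp [h, hd a]

theorem pr_fix_of_mem_span_idem (hn : 0 < n) {M : Matrix (Fin n) (Fin n) K}
    (hM : M ∈ Submodule.span K (idemSet K P mk)) : pr K P mk hn M = M := by
  induction hM using Submodule.span_induction with
  | mem x hx =>
    rcases hx with rfl | ⟨j, hj, rfl⟩
    · exact pr_eps0 K P mk hn
    · exact pr_eps K P mk hn hj
  | zero => exact map_zero _
  | add x y hx hy ihx ihy => rw [map_add, ihx, ihy]
  | smul c x hx ih => rw [LinearMap.map_smul, ih]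

theorem eps_mem_KPone (j : Fin n) : epsMat K P mk j ∈ KPoneSet K P := by
  constructor
  · intro a b h
    rw [epsMat_apply] at h
    by_cases h1 : j = a ∧ j = b
    · obtain ⟨rfl, rfl⟩ := h1
      exact P.le_refl _
    · by_cases h2 : j = a ∧ mk.m j = b
      · obtain ⟨rfl, rfl⟩ := h2
        exact mk.le _
      · simp [h1, h2] at h
  · refine ⟨0, funext fun a => ?_⟩
    simp [Matrix.mulVec, dotProduct, sum_eps_row]

theorem eps0_mem_KPone : eps0Mat K P mk ∈ KPoneSet K P := by
  constructor
  · intro a b h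
    rw [eps0Mat_apply] at h
    by_cases hm : P.IsMin a
    · rw [if_pos hm] at h
      have : a = b := by by_contra hab; simp [hab] at h
      exact this ▸ P.le_refl _
    · rw [if_neg hm] at h
      have : mk.m a = b := by by_contra hab; simp [hab] at h
      exact this ▸ mk.le _
  · refine ⟨1, funext fun a => ?_⟩
    simp [Matrix.mulVec, dotProduct, sum_eps0_row]

theorem Bmat_mem_KPone {i j : Fin n} (hlt : P.lt i j) : Bmat K P mk j i ∈ KPoneSet K P := by
  constructor
  · intro a b h
    rw [Bmat_apply] at h
    by_cases h1 : j = a ∧ i = b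
    · obtain ⟨rfl, rfl⟩ := h1
      exact hlt.1
    · by_cases h2 : j = a ∧ mk.m j = b
      · obtain ⟨rfl, rfl⟩ := h2
        exact mk.le _
      · simp [h1, h2] at h
  · refine ⟨0, funext fun a => ?_⟩
    simp [Matrix.mulVec, dotProduct, sum_Bmat_row]

theorem sub_pr_mem_W (hn : 0 < n) {M : Matrix (Fin n) (Fin n) K}
    (hM : M ∈ KPoneSet K P) : M - pr K P mk hn M ∈ W K P := by
  obtain ⟨hsupp, c, hc⟩ := hM
  have hrow : ∀ a, ∑ b, M a b = c := fun a => by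
    have := congrFun hc a
    simpa [Matrix.mulVec, dotProduct] using this
  constructor
  · intro a b h
    by_contra hlt
    apply h
    rw [Matrix.sub_apply, pr_apply_entry, hrow]
    by_cases hmin : P.IsMin a
    · rw [if_pos hmin, add_zero, eps0Mat_apply, if_pos hmin]
      by_cases hb : b = a
      · subst hb
        have hMaa : M b b = c := by
          rw [← hrow b]
          refine (Finset.sum_eq_single b (fun i _ hi => ?_) (fun h => absurd (Finset.mem_univ b) h)).symm
          by_contra hne
          exact hi (hmin i (hsupp b i hne))
        simp [hMaa]
      · have hMab : M a b = 0 := by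
          by_contra hne
          exact hb (hmin b (hsupp a b hne))
        simp only [hMab, zero_sub, neg_eq_zero, add_zero]
        have hab : ¬ a = b := fun h => hb h.symm
        simp [hab]
    · rw [if_neg hmin, eps0Mat_apply, if_neg hmin, epsMat_apply]
      have hmne := m_ne_of_not_isMin P mk hmin
      by_cases hb : b = a
      · subst hb
        simp [hmne]
      · have hnle : ¬ P.le b a := fun hle => hlt ⟨hle, hb⟩
        have hMab : M a b = 0 := by
          by_contra hne
          exact hnle (hsupp a b hne)
        have hmb : mk.m a ≠ b := fun hh => hnle (hh ▸ mk.le a)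
        have hab : ¬ a = b := fun h => hb h.symm
        simp [hMab, hmb, hab]
  · intro a
    have hprsum : ∑ b, pr K P mk hn M a b = c := by
      simp only [pr_apply_entry, Finset.sum_add_distrib, ← Finset.mul_sum, sum_eps0_row,
        mul_one, hrow]
      by_cases h : P.IsMin a
      · simp [h]
      · simp [h, ← Finset.mul_sum, sum_eps_row]
    simp only [Matrix.sub_apply, Finset.sum_sub_distrib, hprsum, hrow, sub_self]

set_option synthInstance.maxHeartbeats 1000000

/-- The candidate radical as a (left) ideal of `Kone`. -/
def IW (Kone : Subalgebra K (Matrix (Fin n) (Fin n) K))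
    (hKone : (Kone : Set (Matrix (Fin n) (Fin n) K)) = KPoneSet K P) : Ideal Kone where
  carrier := {x : Kone | (x : Matrix (Fin n) (Fin n) K) ∈ W K P}
  add_mem' := by
    intro x y hx hy
    show ((x + y : Kone) : Matrix (Fin n) (Fin n) K) ∈ W K P
    rw [AddMemClass.coe_add]
    exact (W K P).add_mem hx hy
  zero_mem' := by
    show ((0 : Kone) : Matrix (Fin n) (Fin n) K) ∈ W K P
    rw [ZeroMemClass.coe_zero]
    exact (W K P).zero_mem
  smul_mem' := by
    intro r x hx
    show (((r • x : Kone)) : Matrix (Fin n) (Fin n) K) ∈ W K P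
    rw [smul_eq_mul, MulMemClass.coe_mul]
    have hr : ((r : Matrix (Fin n) (Fin n) K)) ∈ KPoneSet K P := by
      rw [← hKone]; exact r.2
    exact mul_mem_W K P hr.1 hx

theorem mem_IW_iff (Kone : Subalgebra K (Matrix (Fin n) (Fin n) K))
    (hKone : (Kone : Set (Matrix (Fin n) (Fin n) K)) = KPoneSet K P) (x : Kone) :
    x ∈ IW K P Kone hKone ↔ (x : Matrix (Fin n) (Fin n) K) ∈ W K P := Iff.rfl

/-- Evaluation at a diagonal entry, as an algebra homomorphism. -/
def phiD (Kone : Subalgebra K (Matrix (Fin n) (Fin n) K))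
    (hKone : (Kone : Set (Matrix (Fin n) (Fin n) K)) = KPoneSet K P) (j : Fin n) :
    Kone →ₐ[K] K where
  toFun x := (x : Matrix (Fin n) (Fin n) K) j j
  map_one' := by simp [Matrix.one_apply]
  map_mul' x y := by
    have hx : ((x : Matrix (Fin n) (Fin n) K)) ∈ KPoneSet K P := by rw [← hKone]; exact x.2
    have hy : ((y : Matrix (Fin n) (Fin n) K)) ∈ KPoneSet K P := by rw [← hKone]; exact y.2
    show ((x * y : Kone) : Matrix (Fin n) (Fin n) K) j j = _
    rw [MulMemClass.coe_mul, Matrix.mul_apply]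
    refine Finset.sum_eq_single j (fun k _ hk => ?_) (fun h => absurd (Finset.mem_univ j) h)
    by_cases h1 : (x : Matrix (Fin n) (Fin n) K) j k = 0
    · rw [h1, zero_mul]
    · by_cases h2 : (y : Matrix (Fin n) (Fin n) K) k j = 0
      · rw [h2, mul_zero]
      · exact absurd (le_antisymm' P (hx.1 j k h1) (hy.1 k j h2)) hk
  map_zero' := by simp
  map_add' x y := by
    show ((x + y : Kone) : Matrix (Fin n) (Fin n) K) j j = _
    rw [AddMemClass.coe_add, Matrix.add_apply]
  commutes' c := by
    simp [Algebra.algebraMap_eq_smul_one, Matrix.smul_apply, Matrix.one_apply]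

/-- Common row sum, as an algebra homomorphism. -/
def phi0 (Kone : Subalgebra K (Matrix (Fin n) (Fin n) K))
    (hKone : (Kone : Set (Matrix (Fin n) (Fin n) K)) = KPoneSet K P) (hn : 0 < n) :
    Kone →ₐ[K] K where
  toFun x := ∑ i, (x : Matrix (Fin n) (Fin n) K) ⟨0, hn⟩ i
  map_one' := by simp [Matrix.one_apply]
  map_mul' x y := by
    obtain ⟨hy1, c, hc⟩ : ((y : Matrix (Fin n) (Fin n) K)) ∈ KPoneSet K P := by
      rw [← hKone]; exact y.2
    have hrow : ∀ k, ∑ i, (y : Matrix (Fin n) (Fin n) K) k i = c := fun k => by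
      have := congrFun hc k
      simpa [Matrix.mulVec, dotProduct] using this
    show ∑ i, ((x * y : Kone) : Matrix (Fin n) (Fin n) K) ⟨0, hn⟩ i = _
    rw [MulMemClass.coe_mul]
    simp only [Matrix.mul_apply]
    rw [Finset.sum_comm]
    calc ∑ k, ∑ i, (x : Matrix (Fin n) (Fin n) K) ⟨0, hn⟩ k *
            (y : Matrix (Fin n) (Fin n) K) k i
        = ∑ k, (x : Matrix (Fin n) (Fin n) K) ⟨0, hn⟩ k * c := by
          refine Finset.sum_congr rfl fun k _ => ?_
          rw [← Finset.mul_sum, hrow k]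
      _ = (∑ k, (x : Matrix (Fin n) (Fin n) K) ⟨0, hn⟩ k) *
            (∑ i, (y : Matrix (Fin n) (Fin n) K) ⟨0, hn⟩ i) := by
          rw [hrow, ← Finset.sum_mul]
  map_zero' := by simp
  map_add' x y := by
    show ∑ i, ((x + y : Kone) : Matrix (Fin n) (Fin n) K) ⟨0, hn⟩ i = _
    simp [AddMemClass.coe_add, Matrix.add_apply, Finset.sum_add_distrib]
  commutes' c := by
    simp [Algebra.algebraMap_eq_smul_one, Matrix.smul_apply, Matrix.one_apply]

end Stmt3Aux


set_option maxHeartbeats 1000000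
set_option synthInstance.maxHeartbeats 1000000

/-- The Jacobson radical of `K¹𝒫` is the span of the `B_{ji}` (`i ≺ j`); the `B_{ji}` with
`i ≺ j`, `i ≠ m(j)` form a `K`-basis of it; and `K¹𝒫 = span{ε₀, ε_j} ⊕ rad K¹𝒫`. -/
theorem stmt3 (K : Type) [Field K] (n : ℕ) (hn : 1 ≤ n) (P : PosetOn n)
    (mk : MinimalMarking P)
    (Kone : Subalgebra K (Matrix (Fin n) (Fin n) K))
    (hKone : (Kone : Set (Matrix (Fin n) (Fin n) K)) = KPoneSet K P) :
    -- the Jacobson radical of the ring `K¹𝒫` equals the span of the `B_{ji}`, `i ≺ j`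
    (∀ x : Kone, x ∈ Ideal.jacobson (⊥ : Ideal Kone) ↔
      (x : Matrix (Fin n) (Fin n) K) ∈ Submodule.span K (BSet K P mk)) ∧
    -- the `B_{ji}` with `i ≺ j`, `i ≠ m(j)` form a `K`-basis of this radical
    LinearIndependent K (Bfam K P mk) ∧
    Submodule.span K (Set.range (Bfam K P mk)) = Submodule.span K (BSet K P mk) ∧
    -- internal direct sum decomposition of `K¹𝒫`
    Submodule.span K (idemSet K P mk) ⊓ Submodule.span K (BSet K P mk) = ⊥ ∧
    ((Submodule.span K (idemSet K P mk) ⊔ Submodule.span K (BSet K P mk) :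
        Submodule K (Matrix (Fin n) (Fin n) K)) : Set (Matrix (Fin n) (Fin n) K))
      = KPoneSet K P := by
  classical
  have hn0 : 0 < n := hn
  have hmemK : ∀ x : Kone, (x : Matrix (Fin n) (Fin n) K) ∈ KPoneSet K P := fun x => by
    rw [← hKone]; exact x.2
  refine ⟨?_, ?_, ?_, ?_, ?_⟩
  · -- Jacobson radical
    intro x
    constructor
    · intro hx
      have hker : ∀ (φ : Kone →ₐ[K] K), φ x = 0 := by
        intro φ
        have hsurj : Function.Surjective φ := fun c => ⟨algebraMap K Kone c, φ.commutes c⟩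
        have hmax : (RingHom.ker φ).IsMaximal := RingHom.ker_isMaximal_of_surjective φ hsurj
        rw [Ideal.jacobson] at hx
        exact RingHom.mem_ker.mp (Ideal.mem_sInf.mp hx ⟨bot_le, hmax⟩)
      have hdiag : ∀ j, (x : Matrix (Fin n) (Fin n) K) j j = 0 :=
        fun j => hker (Stmt3Aux.phiD K P Kone hKone j)
      have hsum0 : ∑ i, (x : Matrix (Fin n) (Fin n) K) ⟨0, hn0⟩ i = 0 :=
        hker (Stmt3Aux.phi0 K P Kone hKone hn0)
      obtain ⟨hx1, c, hc⟩ := hmemK x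
      have hrow : ∀ a, ∑ b, (x : Matrix (Fin n) (Fin n) K) a b = c := fun a => by
        have := congrFun hc a
        simpa [Matrix.mulVec, dotProduct] using this
      have hc0 : c = 0 := (hrow ⟨0, hn0⟩).symm.trans hsum0
      rw [Stmt3Aux.spanB_eq_W]
      exact ⟨fun a b h => ⟨hx1 a b h, fun hba => h (by rw [hba]; exact hdiag a)⟩,
        fun a => (hrow a).trans hc0⟩
    · intro hxspan
      rw [Stmt3Aux.spanB_eq_W] at hxspan
      have hxIW : x ∈ Stmt3Aux.IW K P Kone hKone := hxspan
      rw [Ideal.jacobson]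
      refine Ideal.mem_sInf.mpr ?_
      rintro J ⟨-, hJmax⟩
      by_contra hxJ
      have hlt : J < J ⊔ Stmt3Aux.IW K P Kone hKone :=
        lt_of_le_of_ne le_sup_left fun h => hxJ (by rw [h]; exact Submodule.mem_sup_right hxIW)
      have htop : J ⊔ Stmt3Aux.IW K P Kone hKone = ⊤ := hJmax.1.2 _ hlt
      have h1 : (1 : Kone) ∈ J ⊔ Stmt3Aux.IW K P Kone hKone := by rw [htop]; trivial
      obtain ⟨m, hm, w, hw, hmw⟩ := Submodule.mem_sup.mp h1
      have hwn : w ^ n = 0 := by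
        have h0 : ((w : Matrix (Fin n) (Fin n) K)) ^ n = 0 :=
          Stmt3Aux.nilpotent_of_mem_W K P hw
        exact Subtype.ext (by rw [SubmonoidClass.coe_pow, ZeroMemClass.coe_zero]; exact h0)
      have hm1 : m = 1 - w := eq_sub_of_add_eq hmw
      have hunit : IsUnit m := by
        rw [hm1]
        refine isUnit_iff_exists.mpr ⟨∑ i ∈ Finset.range n, w ^ i, ?_, ?_⟩
        · have h2 : (1 - w) * ∑ i ∈ Finset.range n, w ^ i
              = -((w - 1) * ∑ i ∈ Finset.range n, w ^ i) := by rw [← neg_sub w 1]; exact neg_mul (w - 1) _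
          rw [h2, mul_geom_sum, hwn]
          simp
        · have h2 : (∑ i ∈ Finset.range n, w ^ i) * (1 - w)
              = -((∑ i ∈ Finset.range n, w ^ i) * (w - 1)) := by rw [← neg_sub w 1]; exact mul_neg _ (w - 1)
          rw [h2, geom_sum_mul, hwn]
          simp
      exact hJmax.ne_top (J.eq_top_of_isUnit_mem hm hunit)
  · -- linear independence
    rw [linearIndependent_iff']
    intro s g hsum q hq
    have happ := congrArg (fun M : Matrix (Fin n) (Fin n) K => M q.1.2 q.1.1) hsum
    simp only [Matrix.sum_apply, Matrix.zero_apply] at happ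
    have hterm : ∀ q' ∈ s, (g q' • Bfam K P mk q') q.1.2 q.1.1
        = if q' = q then g q' else 0 := by
      intro q' _
      rw [Matrix.smul_apply, smul_eq_mul]
      by_cases hqq : q' = q
      · subst hqq
        have hB : Bfam K P mk q' q'.1.2 q'.1.1 = 1 := by
          rw [Bfam, Stmt3Aux.Bmat_apply]
          have hne := Ne.symm q'.2.2
          simp [hne]
        rw [hB, mul_one, if_pos rfl]
      · have hB : Bfam K P mk q' q.1.2 q.1.1 = 0 := by
          rw [Bfam, Stmt3Aux.Bmat_apply]
          have hc1 : ¬(q'.1.2 = q.1.2 ∧ q'.1.1 = q.1.1) := fun hh =>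
            hqq (Subtype.ext (Prod.ext hh.2 hh.1))
          have hc2 : ¬(q'.1.2 = q.1.2 ∧ mk.m q'.1.2 = q.1.1) := fun hh =>
            q.2.2 (by rw [← hh.2, hh.1])
          simp [hc1, hc2]
        rw [hB, mul_zero, if_neg hqq]
    rw [Finset.sum_congr rfl hterm, Finset.sum_ite_eq' s q, if_pos hq] at happ
    exact happ
  · -- the two spans agree
    apply le_antisymm
    · apply Submodule.span_mono
      rintro x ⟨q, rfl⟩
      exact ⟨q.1.1, q.1.2, q.2.1, rfl⟩
    · rw [Submodule.span_le]
      rintro x ⟨i, j, hlt, rfl⟩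
      by_cases h : i = mk.m j
      · have hB : Bmat K P mk j i = 0 := by rw [h]; simp [Bmat]
        rw [hB]
        exact Submodule.zero_mem _
      · exact Submodule.subset_span ⟨⟨(i, j), hlt, h⟩, rfl⟩
  · -- trivial intersection
    rw [eq_bot_iff]
    intro x hx
    obtain ⟨h1, h2⟩ := Submodule.mem_inf.mp hx
    rw [Stmt3Aux.spanB_eq_W] at h2
    have hfix := Stmt3Aux.pr_fix_of_mem_span_idem K P mk hn0 h1
    rw [Submodule.mem_bot, ← hfix, Stmt3Aux.pr_eq_zero_of_mem_W K P mk hn0 h2]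
  · -- the sum is everything
    apply Set.Subset.antisymm
    · intro x hx
      have hle : Submodule.span K (idemSet K P mk) ⊔ Submodule.span K (BSet K P mk)
          ≤ Subalgebra.toSubmodule Kone := by
        refine sup_le (Submodule.span_le.mpr ?_) (Submodule.span_le.mpr ?_)
        · intro y hy
          rcases hy with rfl | ⟨j, hj, rfl⟩
          · rw [SetLike.mem_coe, Subalgebra.mem_toSubmodule, ← SetLike.mem_coe, hKone]
            exact Stmt3Aux.eps0_mem_KPone K P mk
          · rw [SetLike.mem_coe, Subalgebra.mem_toSubmodule, ← SetLike.mem_coe, hKone]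
            exact Stmt3Aux.eps_mem_KPone K P mk j
        · rintro y ⟨i, j, hlt, rfl⟩
          rw [SetLike.mem_coe, Subalgebra.mem_toSubmodule, ← SetLike.mem_coe, hKone]
          exact Stmt3Aux.Bmat_mem_KPone K P mk hlt
      have hxK : x ∈ Kone := hle hx
      rw [← hKone]
      exact hxK
    · intro M hM
      have h1 : Stmt3Aux.pr K P mk hn0 M ∈ Submodule.span K (idemSet K P mk) := by
        rw [Stmt3Aux.pr_apply]
        refine Submodule.add_mem _
          (Submodule.smul_mem _ _ (Submodule.subset_span (Set.mem_insert _ _)))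
          (Submodule.sum_mem _ fun j hj => Submodule.smul_mem _ _ (Submodule.subset_span
            (Set.mem_insert_iff.mpr (Or.inr ⟨j, (Finset.mem_filter.mp hj).2, rfl⟩))))
      have h2 : M - Stmt3Aux.pr K P mk hn0 M ∈ Submodule.span K (BSet K P mk) := by
        rw [Stmt3Aux.spanB_eq_W]
        exact Stmt3Aux.sub_pr_mem_W K P mk hn0 hM
      have h3 := Submodule.add_mem_sup h1 h2
      have heq : Stmt3Aux.pr K P mk hn0 M + (M - Stmt3Aux.pr K P mk hn0 M) = M := by abel
      rw [heq] at h3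
      exact h3
end

section
/- For every k ∈ 𝒫 the left L-module Hom_{A₂}(L, S_A(k)) of A₂-linear maps is isomorphic to D(I_k L); moreover Hom_{A₂}(L, S_A(0)) is one-dimensional over K and isomorphic as a left L-module to S₀. -/
open Matrix

set_option synthInstance.maxHeartbeats 1000000
set_option maxHeartbeats 2000000

/-- The row-centralized subspace `K₀¹𝒫`. -/
def KP0Set (K : Type) [Field K] {n : ℕ} (P : PosetOn n) : Set (Matrix (Fin n) (Fin n) K) :=
  {M | M ∈ KPset K P ∧ M *ᵥ (fun _ => 1) = 0}

/-- The matrix model of the left Burt–Butler algebra. -/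
def LSet (K : Type) [Field K] {n : ℕ} (P : PosetOn n) :
    Set (Matrix (Fin n ⊕ Fin n) (Fin n ⊕ Fin n) K) :=
  {X | X.toBlocks₁₁ ∈ KPset K P ∧ X.toBlocks₁₂ ∈ KP0Set K P ∧
       X.toBlocks₂₁ ∈ KPset K P ∧ X.toBlocks₂₂ ∈ KPoneSet K P}
section GenericModules

/-- `A₂`: block matrices `(r 0; s λ·Id_n)` with `r, s` diagonal. -/
def A2Set (K : Type) [Field K] (n : ℕ) : Set (Matrix (Fin n ⊕ Fin n) (Fin n ⊕ Fin n) K) :=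
  {X | (∃ r : Fin n → K, X.toBlocks₁₁ = Matrix.diagonal r) ∧ X.toBlocks₁₂ = 0 ∧
       (∃ s : Fin n → K, X.toBlocks₂₁ = Matrix.diagonal s) ∧
       ∃ c : K, X.toBlocks₂₂ = c • (1 : Matrix (Fin n) (Fin n) K)}

section DualGeneric

variable {K : Type} [Field K] {A : Type} [Ring A] [Algebra K A]

/-- The right ideal `e A = {u ∈ A : e u = u}` (for `e` idempotent), as a `K`-subspace. -/
def cornerRight (e : A) : Submodule K A where
  carrier := {u | e * u = u}
  add_mem' := by
    intro a b ha hb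
    show e * (a + b) = a + b
    rw [mul_add, ha, hb]
  zero_mem' := mul_zero _
  smul_mem' := by
    intro c u hu
    show e * (c • u) = c • u
    rw [mul_smul_comm, hu]

/-- Right multiplication by `x ∈ A` on `e A`, as a `K`-linear map. -/
def rmulCorner (e : A) (x : A) : ↥(cornerRight (K := K) e) →ₗ[K] ↥(cornerRight (K := K) e) where
  toFun u := ⟨u.1 * x, by
    have h : e * u.1 = u.1 := u.2
    show e * (u.1 * x) = u.1 * x
    rw [← mul_assoc, h]⟩
  map_add' u v := by
    apply Subtype.ext
    show (u.1 + v.1) * x = u.1 * x + v.1 * x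
    rw [add_mul]
  map_smul' c u := by
    apply Subtype.ext
    show (c • u.1) * x = c • (u.1 * x)
    rw [smul_mul_assoc]

/-- The `K`-linear dual `D(e A)`. -/
abbrev DualMod (e : A) : Type _ := Module.Dual K ↥(cornerRight (K := K) e)

/-- The left `A`-module structure on `D(e A)`: `(x·φ)(u) = φ(u x)`. -/
noncomputable instance dualModule (e : A) : Module A (DualMod (K := K) e) where
  smul x φ := φ ∘ₗ rmulCorner e x
  one_smul φ := LinearMap.ext fun u => by
    show φ (rmulCorner e 1 u) = φ u
    congr 1
    exact Subtype.ext (mul_one _)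
  mul_smul x y φ := LinearMap.ext fun u => by
    show φ (rmulCorner e (x * y) u) = φ (rmulCorner e y (rmulCorner e x u))
    congr 1
    exact Subtype.ext (mul_assoc _ _ _).symm
  smul_zero x := rfl
  smul_add x φ ψ := rfl
  add_smul x y φ := LinearMap.ext fun u => by
    show φ (rmulCorner e (x + y) u) = φ (rmulCorner e x u) + φ (rmulCorner e y u)
    rw [← map_add]
    congr 1
    exact Subtype.ext (by show u.1 * (x + y) = u.1 * x + u.1 * y; rw [mul_add])
  zero_smul φ := LinearMap.ext fun u => by
    show φ (rmulCorner e 0 u) = 0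
    have h : rmulCorner e 0 u = 0 := Subtype.ext (mul_zero _)
    rw [h, map_zero]

/-- `K` viewed as a left module over `A` via an algebra character `σ : A → K`. -/
def Twist (K : Type) [Field K] {A : Type} [Ring A] [Algebra K A] (σ : A →ₐ[K] K) : Type := K

instance (σ : A →ₐ[K] K) : AddCommGroup (Twist K σ) := inferInstanceAs (AddCommGroup K)

instance (σ : A →ₐ[K] K) : Module A (Twist K σ) := Module.compHom K σ.toRingHom

instance (σ : A →ₐ[K] K) : Module K (Twist K σ) := inferInstanceAs (Module K K)

instance (σ : A →ₐ[K] K) : SMulCommClass A K (Twist K σ) :=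
  ⟨fun a c t => by
    have t' : K := t
    show σ a * (c * (show K from t)) = c * (σ a * (show K from t))
    ring⟩

end DualGeneric

section CoInduced

variable {K : Type} [Field K] {A B : Type} [Ring A] [Algebra K A] [Ring B] [Algebra K B]
variable (inc : B →ₐ[K] A)

/-- `A` as a left `B`-module via the embedding `inc`. -/
def IndMod : Module B A := Module.compHom A inc.toRingHom

/-- The space of `B`-linear maps `Hom_B(A, N)` (where `A` is a `B`-module via `inc`). -/
abbrev CoIndHom (N : Type) [AddCommGroup N] [Module B N] : Type :=
  @LinearMap B B _ _ (RingHom.id B) A N _ _ (IndMod inc) _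

variable (N : Type) [AddCommGroup N] [Module B N]

/-- Right multiplication by `x : A` as a `B`-linear endomorphism of `A`. -/
def rmulInd (x : A) : @LinearMap B B _ _ (RingHom.id B) A A _ _ (IndMod inc) (IndMod inc) :=
  letI := IndMod inc
  { toFun := fun y => y * x
    map_add' := fun y z => add_mul y z x
    map_smul' := fun b y => by
      show (inc b * y) * x = inc b * (y * x)
      rw [mul_assoc] }

/-- The left `A`-module structure on `Hom_B(A, N)`: `(x·φ)(y) = φ(y x)`. -/
noncomputable instance coIndModule : Module A (CoIndHom inc N) where
  smul x φ := LinearMap.comp φ (rmulInd inc x)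
  one_smul φ := by
    letI := IndMod inc
    refine LinearMap.ext fun y => ?_
    show φ (rmulInd inc 1 y) = φ y
    congr 1
    exact mul_one y
  mul_smul x y φ := by
    letI := IndMod inc
    refine LinearMap.ext fun z => ?_
    show φ (rmulInd inc (x * y) z) = φ (rmulInd inc y (rmulInd inc x z))
    congr 1
    exact (mul_assoc z x y).symm
  smul_zero x := rfl
  smul_add x φ ψ := rfl
  add_smul x y φ := by
    letI := IndMod inc
    refine LinearMap.ext fun z => ?_
    show φ (rmulInd inc (x + y) z) = φ (rmulInd inc x z) + φ (rmulInd inc y z)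
    rw [← map_add]
    congr 1
    exact mul_add z x y
  zero_smul φ := by
    letI := IndMod inc
    refine LinearMap.ext fun z => ?_
    show φ (rmulInd inc 0 z) = 0
    have h : rmulInd inc 0 z = 0 := mul_zero z
    rw [h, map_zero]

end CoInduced

section MyAux

variable {K : Type} [Field K] {A B : Type} [Ring A] [Algebra K A] [Ring B] [Algebra K B]

lemma myTwist_smul (τ' : B →ₐ[K] K) (b : B) (t : Twist K τ') :
    b • t = (τ' b * (show K from t) : K) := rfl

lemma myTwist_Ksmul (τ' : B →ₐ[K] K) (c : K) (t : Twist K τ') :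
    c • t = (c * (show K from t) : K) := rfl

lemma myCoInd_apply_mul (inc : B →ₐ[K] A) {N : Type} [AddCommGroup N] [Module B N]
    (ψ : CoIndHom inc N) (b : B) (y : A) : ψ (inc b * y) = b • ψ y := by
  letI := IndMod inc
  exact ψ.map_smul b y

lemma myCoInd_apply_smul (inc : B →ₐ[K] A) (τ' : B →ₐ[K] K)
    (ψ : CoIndHom inc (Twist K τ')) (c : K) (y : A) : ψ (c • y) = c • ψ y := by
  have h : c • y = inc (algebraMap K B c) * y := by
    rw [AlgHom.commutes, Algebra.smul_def]
  have hc : τ' (algebraMap K B c) = c := by simp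
  rw [h, myCoInd_apply_mul, myTwist_smul, myTwist_Ksmul, hc]

lemma myCoInd_smul_apply (inc : B →ₐ[K] A) {N : Type} [AddCommGroup N] [Module B N]
    (ψ : CoIndHom inc N) (x : A) (y : A) : (x • ψ) y = ψ (y * x) := rfl

/-- Generic form of the first isomorphism. -/
noncomputable def myPart1Equiv (inc : B →ₐ[K] A) (τ' : B →ₐ[K] K) (e : A)
    (he : e * e = e) (b0 : B) (hb0 : inc b0 = e) (hτb0 : τ' b0 = 1)
    (hcomm : ∀ c : B, e * inc c = τ' c • e) :
    (CoIndHom inc (Twist K τ')) ≃ₗ[A] DualMod (K := K) e := by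
  letI := IndMod inc
  have hmem : ∀ y : A, e * (e * y) = e * y := fun y => by rw [← mul_assoc, he]
  refine
  { toFun := fun ψ =>
      { toFun := fun u => (show K from ψ u.1)
        map_add' := fun u v => ψ.map_add u.1 v.1
        map_smul' := fun c u => myCoInd_apply_smul inc τ' ψ c u.1
      }
    invFun := fun φ =>
      { toFun := fun y => (show Twist K τ' from φ ⟨e * y, hmem y⟩)
        map_add' := fun y z => by
          have h1 : (⟨e * (y + z), hmem _⟩ : ↥(cornerRight (K := K) e))
              = ⟨e * y, hmem y⟩ + ⟨e * z, hmem z⟩ := by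
            apply Subtype.ext
            show e * (y + z) = e * y + e * z
            rw [mul_add]
          show (φ ⟨e * (y + z), hmem _⟩ : K) = φ ⟨e * y, hmem y⟩ + φ ⟨e * z, hmem z⟩
          rw [h1, _root_.map_add]
        map_smul' := fun b y => by
          have h1 : (⟨e * (inc b * y), hmem _⟩ : ↥(cornerRight (K := K) e))
              = τ' b • ⟨e * y, hmem y⟩ := by
            apply Subtype.ext
            show e * (inc b * y) = τ' b • (e * y)
            rw [← mul_assoc, hcomm, smul_mul_assoc]
          show (φ ⟨e * (inc b * y), hmem _⟩ : K) = τ' b * φ ⟨e * y, hmem y⟩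
          rw [h1, _root_.map_smul, smul_eq_mul] }
    map_add' := fun ψ ψ' => rfl
    map_smul' := fun x ψ => rfl
    left_inv := fun ψ => by
      refine LinearMap.ext fun y => ?_
      show ψ (e * y) = ψ y
      rw [← hb0, myCoInd_apply_mul, myTwist_smul, hτb0, one_mul]
    right_inv := fun φ => by
      refine LinearMap.ext fun u => ?_
      show φ ⟨e * u.1, hmem _⟩ = φ u
      congr 1
      exact Subtype.ext u.2 }

/-- Key vanishing lemma for the second part. -/
lemma myPart2Key (inc : B →ₐ[K] A) (τ0 : B →ₐ[K] K) (σ : A →ₐ[K] K)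
    (hdecomp : ∀ x : A, ∃ (b1 b2 : B) (y1 y2 : A), τ0 b1 = 0 ∧ τ0 b2 = 0 ∧
       x = σ x • 1 + inc b1 * y1 + inc b2 * y2)
    (ψ : CoIndHom inc (Twist K τ0)) (x : A) :
    (show K from ψ x) = σ x * (show K from ψ 1) := by
  obtain ⟨b1, b2, y1, y2, h1, h2, hx⟩ := hdecomp x
  have h := congrArg ψ hx
  rw [_root_.map_add, _root_.map_add, myCoInd_apply_mul, myCoInd_apply_mul, myTwist_smul, myTwist_smul,
    h1, h2, myCoInd_apply_smul, myTwist_Ksmul] at h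
  show (ψ x : K) = _
  rw [h, zero_mul, zero_mul]
  change (σ x * (show K from ψ 1) : K) + (0 : K) + (0 : K) = _
  rw [add_zero, add_zero]

/-- Generic form of the second isomorphism. -/
noncomputable def myPart2Equiv (inc : B →ₐ[K] A) (τ0 : B →ₐ[K] K) (σ : A →ₐ[K] K)
    (hσinc : ∀ b : B, σ (inc b) = τ0 b)
    (hdecomp : ∀ x : A, ∃ (b1 b2 : B) (y1 y2 : A), τ0 b1 = 0 ∧ τ0 b2 = 0 ∧
       x = σ x • 1 + inc b1 * y1 + inc b2 * y2) :
    (CoIndHom inc (Twist K τ0)) ≃ₗ[A] Twist K σ := by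
  letI := IndMod inc
  refine
  { toFun := fun ψ => (show Twist K σ from (show K from ψ 1))
    invFun := fun t =>
      { toFun := fun y => (show Twist K τ0 from (σ y * (show K from t) : K))
        map_add' := fun y z => by
          show (σ (y + z) * (show K from t) : K)
              = (σ y * (show K from t) : K) + (σ z * (show K from t) : K)
          rw [_root_.map_add, add_mul]
        map_smul' := fun b y => by
          show (σ (inc b * y) * (show K from t) : K)
              = (τ0 b * (σ y * (show K from t) : K) : K)
          rw [_root_.map_mul, hσinc, mul_assoc] }
    map_add' := fun ψ ψ' => rfl
    map_smul' := fun x ψ => by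
      show (show K from (x • ψ) 1) = (σ x * (show K from ψ 1) : K)
      rw [myCoInd_smul_apply, one_mul]
      exact myPart2Key inc τ0 σ hdecomp ψ x
    left_inv := fun ψ => by
      refine LinearMap.ext fun y => ?_
      show (σ y * (show K from ψ 1) : K) = (show K from ψ y)
      exact (myPart2Key inc τ0 σ hdecomp ψ y).symm
    right_inv := fun t => by
      show (σ 1 * (show K from t) : K) = t
      rw [_root_.map_one, one_mul] }

/-- The `K`-linear version for the dimension count. -/
noncomputable def myPart2KEquiv (inc : B →ₐ[K] A) (τ0 : B →ₐ[K] K) (σ : A →ₐ[K] K)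
    (hσinc : ∀ b : B, σ (inc b) = τ0 b)
    (hdecomp : ∀ x : A, ∃ (b1 b2 : B) (y1 y2 : A), τ0 b1 = 0 ∧ τ0 b2 = 0 ∧
       x = σ x • 1 + inc b1 * y1 + inc b2 * y2) :
    (CoIndHom inc (Twist K τ0)) ≃ₗ[K] K := by
  letI := IndMod inc
  refine
  { toFun := fun ψ => (show K from ψ 1)
    invFun := fun t =>
      { toFun := fun y => (show Twist K τ0 from (σ y * t : K))
        map_add' := fun y z => by
          show (σ (y + z) * t : K) = (σ y * t : K) + (σ z * t : K)
          rw [_root_.map_add, add_mul]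
        map_smul' := fun b y => by
          show (σ (inc b * y) * t : K) = (τ0 b * (σ y * t : K) : K)
          rw [_root_.map_mul, hσinc, mul_assoc] }
    map_add' := fun ψ ψ' => rfl
    map_smul' := fun c ψ => rfl
    left_inv := fun ψ => by
      refine LinearMap.ext fun y => ?_
      show (σ y * (show K from ψ 1) : K) = (show K from ψ y)
      exact (myPart2Key inc τ0 σ hdecomp ψ y).symm
    right_inv := fun t => by
      show (σ 1 * t : K) = t
      rw [_root_.map_one, one_mul] }

end MyAux
/-- For every `k ∈ 𝒫` the left `L`-module `Hom_{A₂}(L, S_A(k))` is isomorphic to `D(I_k L)`;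
moreover `Hom_{A₂}(L, S_A(0))` is one-dimensional over `K` and isomorphic as a left
`L`-module to `S₀`. -/
theorem stmt19 {K : Type} [Field K] [IsAlgClosed K] {n : ℕ} (hn : 1 ≤ n) (P : PosetOn n)
    (L : Subalgebra K (Matrix (Fin n ⊕ Fin n) (Fin n ⊕ Fin n) K))
    (hL : (L : Set (Matrix (Fin n ⊕ Fin n) (Fin n ⊕ Fin n) K)) = LSet K P)
    (A2 : Subalgebra K (Matrix (Fin n ⊕ Fin n) (Fin n ⊕ Fin n) K))
    (hA2 : (A2 : Set (Matrix (Fin n ⊕ Fin n) (Fin n ⊕ Fin n) K)) = A2Set K n)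
    -- the inclusion `A₂ ⊆ L`
    (inc : A2 →ₐ[K] L)
    (hinc : ∀ b : A2, ((inc b : L) : Matrix (Fin n ⊕ Fin n) (Fin n ⊕ Fin n) K)
      = (b : Matrix (Fin n ⊕ Fin n) (Fin n ⊕ Fin n) K))
    -- the idempotents `I_k = (E_{kk} 0; 0 0)`, as elements of `L`
    (II : Fin n → L)
    (hII : ∀ k, (II k : Matrix (Fin n ⊕ Fin n) (Fin n ⊕ Fin n) K)
      = Matrix.fromBlocks (Matrix.single k k 1) 0 0 0)
    -- the characters of `A₂` giving the simple modules `S_A(k)`, `k ∈ 𝒫`: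
    -- `(r 0; s λ·Id)·t = r_{kk} t`
    (τ : Fin n → (A2 →ₐ[K] K))
    (hτ : ∀ (k : Fin n) (X : A2),
      (X : Matrix (Fin n ⊕ Fin n) (Fin n ⊕ Fin n) K) (Sum.inl k) (Sum.inl k) = τ k X)
    -- the character of `A₂` giving `S_A(0)`: `(r 0; s λ·Id)·t = λ t`
    (τ0 : A2 →ₐ[K] K)
    (hτ0 : ∀ (X : A2) (i : Fin n),
      (X : Matrix (Fin n ⊕ Fin n) (Fin n ⊕ Fin n) K) (Sum.inr i) (Sum.inr i) = τ0 X)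
    -- `σ : L → K`, `(a b; c d) ↦ λ` with `d𝟙 = λ𝟙`, giving the `L`-module `S₀`
    (σ : L →ₐ[K] K)
    (hσ : ∀ X : L, (X : Matrix (Fin n ⊕ Fin n) (Fin n ⊕ Fin n) K).toBlocks₂₂
        *ᵥ (fun _ => (1 : K)) = fun _ => σ X) :
    (∀ k : Fin n,
      Nonempty ((CoIndHom inc (Twist K (τ k))) ≃ₗ[L] DualMod (K := K) (II k))) ∧
    Module.finrank K (CoIndHom inc (Twist K τ0)) = 1 ∧
    Nonempty ((CoIndHom inc (Twist K τ0)) ≃ₗ[L] Twist K σ) := by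
  classical
  set M2 := Matrix (Fin n ⊕ Fin n) (Fin n ⊕ Fin n) K
  -- membership helpers
  have hLmem : ∀ x : L, (x : M2) ∈ LSet K P := fun x => by
    have h := x.2
    rw [← SetLike.mem_coe, hL] at h
    exact h
  have memL : ∀ m : M2, m ∈ LSet K P → m ∈ L := fun m hm => by
    rw [← SetLike.mem_coe, hL]
    exact hm
  have hA2mem : ∀ b : A2, (b : M2) ∈ A2Set K n := fun b => by
    have h := b.2
    rw [← SetLike.mem_coe, hA2] at h
    exact h
  have memA2 : ∀ m : M2, m ∈ A2Set K n → m ∈ A2 := fun m hm => by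
    rw [← SetLike.mem_coe, hA2]
    exact hm
  have i0 : Fin n := ⟨0, hn⟩
  -- Part 1
  have part1 : ∀ k : Fin n,
      Nonempty ((CoIndHom inc (Twist K (τ k))) ≃ₗ[L] DualMod (K := K) (II k)) := by
    intro k
    set E : Matrix (Fin n) (Fin n) K := Matrix.single k k 1 with hE
    have hEdiag : E = Matrix.diagonal (fun i => if i = k then (1 : K) else 0) := by
      ext i j
      by_cases h1 : i = k <;> by_cases h2 : j = k <;>
        simp [hE, Matrix.single, Matrix.diagonal, h1, h2] <;> aesop
    have hb0mem : Matrix.fromBlocks E 0 0 0 ∈ A2Set K n := by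
      refine ⟨⟨fun i => if i = k then 1 else 0, by simp [hEdiag]⟩, by simp,
        ⟨fun _ => (0 : K), by simp [Matrix.diagonal_zero]⟩, ⟨0, by simp⟩⟩
    set b0 : A2 := ⟨Matrix.fromBlocks E 0 0 0, memA2 _ hb0mem⟩ with hb0def
    have hb0 : inc b0 = II k := by
      apply Subtype.ext
      rw [hinc, hII]
    have hτb0 : τ k b0 = 1 := by
      rw [← hτ k b0]
      show Matrix.fromBlocks E 0 0 0 (Sum.inl k) (Sum.inl k) = 1
      simp [hE]
    have he : II k * II k = II k := by
      apply Subtype.ext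
      rw [MulMemClass.coe_mul, hII]
      simp [Matrix.fromBlocks_multiply, hE, Matrix.single_mul_single_same]
    have hcomm : ∀ c : A2, II k * inc c = τ k c • II k := by
      intro c
      obtain ⟨⟨r, hr⟩, h12, ⟨s, hs⟩, lam, hlam⟩ := hA2mem c
      have hτc : τ k c = r k := by
        rw [← hτ k c]
        have := congrFun (congrFun hr k) k
        simp only [Matrix.toBlocks₁₁, Matrix.of_apply] at this
        rw [this]
        simp [Matrix.diagonal]
      apply Subtype.ext
      rw [MulMemClass.coe_mul, SetLike.val_smul, hinc, hII, hτc]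
      have hEmul : E * Matrix.diagonal r = r k • E := by
        ext i j
        by_cases h2 : j = k <;>
          simp [hE, Matrix.mul_diagonal, Matrix.single, h2] <;> aesop
      calc Matrix.fromBlocks E 0 0 0 * (c : M2)
          = Matrix.fromBlocks E 0 0 0 *
            Matrix.fromBlocks ((c : M2).toBlocks₁₁) ((c : M2).toBlocks₁₂)
              ((c : M2).toBlocks₂₁) ((c : M2).toBlocks₂₂) := by
            rw [Matrix.fromBlocks_toBlocks]
        _ = r k • Matrix.fromBlocks E 0 0 0 := by
            rw [hr, h12, Matrix.fromBlocks_multiply, Matrix.fromBlocks_smul, hEmul]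
            simp
    exact ⟨myPart1Equiv inc (τ k) (II k) he b0 hb0 hτb0 hcomm⟩
  -- Part 2 ingredients
  have hσinc : ∀ b : A2, σ (inc b) = τ0 b := by
    intro b
    obtain ⟨⟨r, hr⟩, h12, ⟨s, hs⟩, lam, hlam⟩ := hA2mem b
    have h1 := congrFun (hσ (inc b)) i0
    rw [hinc, hlam] at h1
    have h2 : ((lam • (1 : Matrix (Fin n) (Fin n) K)) *ᵥ fun _ => (1 : K)) i0 = lam := by
      rw [Matrix.smul_mulVec, Matrix.one_mulVec]
      simp
    have h3 : τ0 b = lam := by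
      rw [← hτ0 b i0]
      have := congrFun (congrFun hlam i0) i0
      simp only [Matrix.toBlocks₂₂, Matrix.of_apply] at this
      rw [this]
      simp
    rw [← h1, h2, h3]
  have hdecomp : ∀ x : L, ∃ (b1 b2 : A2) (y1 y2 : L), τ0 b1 = 0 ∧ τ0 b2 = 0 ∧
      x = σ x • 1 + inc b1 * y1 + inc b2 * y2 := by
    intro x
    obtain ⟨ha, hb, hc, hd⟩ := hLmem x
    -- the two A2-elements
    have hfbmem : (Matrix.fromBlocks 1 0 0 0 : M2) ∈ A2Set K n :=
      ⟨⟨fun _ => 1, by simp⟩, by simp, ⟨fun _ => (0 : K), by simp [Matrix.diagonal_zero]⟩,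
        ⟨0, by simp⟩⟩
    have hgbmem : (Matrix.fromBlocks 0 0 1 0 : M2) ∈ A2Set K n :=
      ⟨⟨fun _ => (0 : K), by simp [Matrix.diagonal_zero]⟩, by simp, ⟨fun _ => 1, by simp⟩,
        ⟨0, by simp⟩⟩
    set fb : A2 := ⟨_, memA2 _ hfbmem⟩ with hfbdef
    set gb : A2 := ⟨_, memA2 _ hgbmem⟩ with hgbdef
    have hτfb : τ0 fb = 0 := by
      rw [← hτ0 fb i0]
      show (Matrix.fromBlocks 1 0 0 0 : M2) (Sum.inr i0) (Sum.inr i0) = 0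
      simp
    have hτgb : τ0 gb = 0 := by
      rw [← hτ0 gb i0]
      show (Matrix.fromBlocks 0 0 1 0 : M2) (Sum.inr i0) (Sum.inr i0) = 0
      simp
    -- the auxiliary element y2 of L
    have hymem : (Matrix.fromBlocks ((x : M2).toBlocks₂₁)
        ((x : M2).toBlocks₂₂ - σ x • 1) 0 0 : M2) ∈ LSet K P := by
      refine ⟨by simpa using hc, ⟨?_, ?_⟩, by simp [KPset], ?_⟩
      · intro j i hne
        simp only [Matrix.toBlocks_fromBlocks₁₂] at hne
        by_cases hij : i = j
        · exact hij ▸ P.le_refl i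
        · apply hd.1 j i
          intro h0
          apply hne
          simp [Matrix.sub_apply, Matrix.smul_apply, Matrix.one_apply, h0, Ne.symm hij]
      · simp only [Matrix.toBlocks_fromBlocks₁₂]
        rw [Matrix.sub_mulVec, Matrix.smul_mulVec, Matrix.one_mulVec, hσ x]
        funext i
        simp
      · exact ⟨by simp [KPset], 0, by rw [Matrix.toBlocks_fromBlocks₂₂, Matrix.zero_mulVec]; rfl⟩
    set yL : L := ⟨_, memL _ hymem⟩ with hyLdef
    refine ⟨fb, gb, x - σ x • 1, yL, hτfb, hτgb, ?_⟩
    apply Subtype.ext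
    rw [AddMemClass.coe_add, AddMemClass.coe_add, MulMemClass.coe_mul, MulMemClass.coe_mul,
      hinc, hinc, SetLike.val_smul, OneMemClass.coe_one]
    show (x : M2) = σ x • 1 + (Matrix.fromBlocks 1 0 0 0 : M2) * ((x - σ x • 1 : L) : M2)
        + (Matrix.fromBlocks 0 0 1 0 : M2) * (yL : M2)
    have hsub : ((x - σ x • 1 : L) : M2) = (x : M2) - σ x • 1 := by
      rw [AddSubgroupClass.coe_sub, SetLike.val_smul, OneMemClass.coe_one]
    rw [hsub]
    show (x : M2) = σ x • 1 + (Matrix.fromBlocks 1 0 0 0 : M2) * ((x : M2) - σ x • 1)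
        + (Matrix.fromBlocks 0 0 1 0 : M2) *
          (Matrix.fromBlocks ((x : M2).toBlocks₂₁) ((x : M2).toBlocks₂₂ - σ x • 1) 0 0)
    have hx : (x : M2) = Matrix.fromBlocks ((x : M2).toBlocks₁₁) ((x : M2).toBlocks₁₂)
        ((x : M2).toBlocks₂₁) ((x : M2).toBlocks₂₂) := (Matrix.fromBlocks_toBlocks _).symm
    rw [show (x : M2) = Matrix.fromBlocks ((x : M2).toBlocks₁₁) ((x : M2).toBlocks₁₂)
        ((x : M2).toBlocks₂₁) ((x : M2).toBlocks₂₂) from hx, ← Matrix.fromBlocks_one]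
    generalize (x : M2).toBlocks₁₁ = a
    generalize (x : M2).toBlocks₁₂ = bb
    generalize (x : M2).toBlocks₂₁ = cc
    generalize (x : M2).toBlocks₂₂ = dd
    simp only [Matrix.fromBlocks_smul, smul_zero, sub_eq_add_neg, Matrix.fromBlocks_neg,
      Matrix.fromBlocks_add, Matrix.fromBlocks_multiply, Matrix.fromBlocks_inj,
      one_mul, zero_mul, mul_zero, add_zero, zero_add, neg_zero, mul_one]
    refine ⟨by abel, trivial, by simp, by simp only [Matrix.toBlocks_fromBlocks₂₂]; abel⟩
  constructor
  · exact part1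
  constructor
  · have E := myPart2KEquiv inc τ0 σ hσinc hdecomp
    rw [E.finrank_eq]
    exact Module.finrank_self K
  · exact ⟨myPart2Equiv inc τ0 σ hσinc hdecomp⟩
end GenericModules
end
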